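/- Let V be a 4-dimensional complex symplectic vector space. There do not exist three pairwise distinct Lagrangian planes P₁, P₂, P₃ ⊆ V such that the three pairwise intersections Pᵢ ∩ Pⱼ are three distinct lines and P₁ + P₂ + P₃ is 3-dimensional. -/

import Mathlib

/-- In a 4-dimensional complex symplectic vector space there are no three pairwise
distinct Lagrangian planes whose pairwise intersections are three distinct lines
and whose span is 3-dimensional. -/
theorem stmt1 (V : Type*) [AddCommGroup V] [Module ℂ V] [FiniteDimensional ℂ V]
    (hV : Module.finrank ℂ V = 4)
    (ω : V →ₗ[ℂ] V →ₗ[ℂ] ℂ)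
    (halt : ∀ v : V, ω v v = 0)
    (hnd : ∀ v : V, (∀ w : V, ω v w = 0) → v = 0) :
    ¬ ∃ P₁ P₂ P₃ : Submodule ℂ V,
      (Module.finrank ℂ P₁ = 2 ∧ ∀ u ∈ P₁, ∀ v ∈ P₁, ω u v = 0) ∧
      (Module.finrank ℂ P₂ = 2 ∧ ∀ u ∈ P₂, ∀ v ∈ P₂, ω u v = 0) ∧
      (Module.finrank ℂ P₃ = 2 ∧ ∀ u ∈ P₃, ∀ v ∈ P₃, ω u v = 0) ∧
      P₁ ≠ P₂ ∧ P₁ ≠ P₃ ∧ P₂ ≠ P₃ ∧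
      Module.finrank ℂ ↥(P₁ ⊓ P₂) = 1 ∧
      Module.finrank ℂ ↥(P₁ ⊓ P₃) = 1 ∧
      Module.finrank ℂ ↥(P₂ ⊓ P₃) = 1 ∧
      (P₁ ⊓ P₂) ≠ (P₁ ⊓ P₃) ∧ (P₁ ⊓ P₂) ≠ (P₂ ⊓ P₃) ∧ (P₁ ⊓ P₃) ≠ (P₂ ⊓ P₃) ∧
      Module.finrank ℂ ↥(P₁ ⊔ P₂ ⊔ P₃) = 3 := by
  rintro ⟨P₁, P₂, P₃, ⟨h1d, h1⟩, ⟨h2d, h2⟩, ⟨h3d, h3⟩, hne12, hne13, hne23,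
    hL12, hL13, hL23, hLne1, hLne2, hLne3, hH⟩
  set H := P₁ ⊔ P₂ ⊔ P₃ with hHdef
  -- each pairwise sup is all of H
  have hsup3 : ∀ P Q : Submodule ℂ V, Module.finrank ℂ P = 2 → Module.finrank ℂ Q = 2 →
      Module.finrank ℂ ↥(P ⊓ Q) = 1 → Module.finrank ℂ ↥(P ⊔ Q) = 3 := by
    intro P Q hP hQ hPQ
    have := Submodule.finrank_sup_add_finrank_inf_eq P Q
    omega
  have hle12 : P₁ ⊔ P₂ ≤ H := le_sup_left
  have hle13 : P₁ ⊔ P₃ ≤ H := sup_le (le_sup_left.trans le_sup_left) le_sup_right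
  have hle23 : P₂ ⊔ P₃ ≤ H := sup_le (le_sup_right.trans le_sup_left) le_sup_right
  have H12 : P₁ ⊔ P₂ = H := Submodule.eq_of_le_of_finrank_eq hle12 (by
    rw [hsup3 P₁ P₂ h1d h2d hL12, hH])
  have H13 : P₁ ⊔ P₃ = H := Submodule.eq_of_le_of_finrank_eq hle13 (by
    rw [hsup3 P₁ P₃ h1d h3d hL13, hH])
  have H23 : P₂ ⊔ P₃ = H := Submodule.eq_of_le_of_finrank_eq hle23 (by
    rw [hsup3 P₂ P₃ h2d h3d hL23, hH])
  -- intersection lines are ω-orthogonal to H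
  have lineperp : ∀ P Q : Submodule ℂ V, (∀ u ∈ P, ∀ v ∈ P, ω u v = 0) →
      (∀ u ∈ Q, ∀ v ∈ Q, ω u v = 0) → P ⊔ Q = H →
      ∀ u ∈ P ⊓ Q, ∀ w ∈ H, ω u w = 0 := by
    intro P Q hP hQ hPQ u hu w hw
    have hker : P ⊔ Q ≤ LinearMap.ker (ω u) := by
      apply sup_le
      · intro v hv; exact LinearMap.mem_ker.mpr (hP u hu.1 v hv)
      · intro v hv; exact LinearMap.mem_ker.mpr (hQ u hu.2 v hv)
    rw [hPQ] at hker
    exact hker hw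
  have perp12 := lineperp P₁ P₂ h1 h2 H12
  have perp13 := lineperp P₁ P₃ h1 h3 H13
  have perp23 := lineperp P₂ P₃ h2 h3 H23
  -- each plane is the sup of two of the lines
  have hdecomp : ∀ L L' P : Submodule ℂ V, Module.finrank ℂ L = 1 →
      Module.finrank ℂ L' = 1 → L ≠ L' → L ≤ P → L' ≤ P →
      Module.finrank ℂ P = 2 → L ⊔ L' = P := by
    intro L L' P hL hL' hne hLP hL'P hP
    have hlei : Module.finrank ℂ ↥(L ⊓ L') ≤ 1 := by
      have := Submodule.finrank_mono (inf_le_left : L ⊓ L' ≤ L)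
      omega
    have hinf : Module.finrank ℂ ↥(L ⊓ L') = 0 := by
      by_contra h
      have h1 : Module.finrank ℂ ↥(L ⊓ L') = 1 := by omega
      have e1 : L ⊓ L' = L := Submodule.eq_of_le_of_finrank_eq inf_le_left (by omega)
      have e2 : L ⊓ L' = L' := Submodule.eq_of_le_of_finrank_eq inf_le_right (by omega)
      exact hne (e1 ▸ e2)
    have hsum := Submodule.finrank_sup_add_finrank_inf_eq L L'
    exact Submodule.eq_of_le_of_finrank_eq (sup_le hLP hL'P) (by omega)
  have D1 : (P₁ ⊓ P₂) ⊔ (P₁ ⊓ P₃) = P₁ :=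
    hdecomp _ _ _ hL12 hL13 hLne1 inf_le_left inf_le_left h1d
  have D2 : (P₁ ⊓ P₂) ⊔ (P₂ ⊓ P₃) = P₂ :=
    hdecomp _ _ _ hL12 hL23 hLne2 inf_le_right inf_le_left h2d
  -- H is totally isotropic
  have hperpH : ∀ u ∈ H, ∀ w ∈ H, ω u w = 0 := by
    intro u hu w hw
    have kmem : ∀ x ∈ H, (ω.flip w) x = 0 → True := fun _ _ _ => trivial
    have hP1 : P₁ ≤ LinearMap.ker (ω.flip w) := by
      rw [← D1]
      apply sup_le
      · intro x hx; exact LinearMap.mem_ker.mpr (perp12 x hx w hw)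
      · intro x hx; exact LinearMap.mem_ker.mpr (perp13 x hx w hw)
    have hP2 : P₂ ≤ LinearMap.ker (ω.flip w) := by
      rw [← D2]
      apply sup_le
      · intro x hx; exact LinearMap.mem_ker.mpr (perp12 x hx w hw)
      · intro x hx; exact LinearMap.mem_ker.mpr (perp23 x hx w hw)
    have : H ≤ LinearMap.ker (ω.flip w) := H12 ▸ sup_le hP1 hP2
    exact this hu
  -- ω is injective as a map to the dual
  have hinj : Function.Injective ω := by
    rw [← LinearMap.ker_eq_bot]
    apply LinearMap.ker_eq_bot'.mpr
    intro v hv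
    exact hnd v fun w => by
      have := LinearMap.congr_fun hv w
      simpa using this
  -- map H into the dual annihilator of H
  have hKle : H.map ω ≤ H.dualAnnihilator := by
    rintro φ ⟨v, hv, rfl⟩
    exact (Submodule.mem_dualAnnihilator _).mpr (hperpH v hv)
  have hKrank : Module.finrank ℂ ↥(H.map ω) = 3 := by
    rw [← (Submodule.equivMapOfInjective ω hinj H).finrank_eq]
    exact hH
  have hann : Module.finrank ℂ ↥H.dualAnnihilator = Module.finrank ℂ (V ⧸ H) :=
    (Subspace.quotEquivAnnihilator H).finrank_eq.symm
  have hq := Submodule.finrank_quotient_add_finrank H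
  have hle := Submodule.finrank_mono hKle
  rw [hKrank, hann] at hle
  omega
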